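/- Let (X, →, ≤) be an ordered transition system where ≤ is a partial order, satisfying downward strict monotonicity, and suppose there exist states x, y ∈ X with x →+ y and y < x. Then Post*({x}) is infinite: in fact there exists an infinite strictly descending sequence y_0 > y_1 > y_2 > ⋯ of states all reachable from x. -/
import Mathlib


/-- In a partially ordered transition system with downward
strict monotonicity, if `x →+ y` and `y < x`, then the reachability set of
`x` is infinite; in fact there is an infinite strictly descending sequence of
states reachable from `x`. -/
theorem stmt_12 {X : Type*} (step le : X → X → Prop)
    (hrefl : ∀ x, le x x)
    (htrans : ∀ x y z, le x y → le y z → le x z)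
    (hantisymm : ∀ x y, le x y → le y x → x = y)
    (hdownstrict : ∀ a b a', step a b → le a' a → a' ≠ a →
      ∃ b', le b' b ∧ b' ≠ b ∧ Relation.ReflTransGen step a' b')
    (x y : X) (hxy : Relation.TransGen step x y)
    (hlt : le y x ∧ y ≠ x) :
    {z | Relation.ReflTransGen step x z}.Infinite ∧
    ∃ g : ℕ → X, (∀ n, Relation.ReflTransGen step x (g n)) ∧
      (∀ n, le (g (n + 1)) (g n) ∧ g (n + 1) ≠ g n) := by
  -- Key lemma: downward strict monotonicity extends to multi-step runs.
  have L : ∀ {a b : X}, Relation.ReflTransGen step a b → ∀ a', le a' a → a' ≠ a →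
      ∃ b', le b' b ∧ b' ≠ b ∧ Relation.ReflTransGen step a' b' := by
    intro a b hab
    induction hab using Relation.ReflTransGen.head_induction_on with
    | refl => intro a' h1 h2; exact ⟨a', h1, h2, Relation.ReflTransGen.refl⟩
    | head hac hcb ih =>
      intro a' h1 h2
      obtain ⟨c', hc1, hc2, hc3⟩ := hdownstrict _ _ _ hac h1 h2
      obtain ⟨b', hb1, hb2, hb3⟩ := ih c' hc1 hc2
      exact ⟨b', hb1, hb2, hc3.trans hb3⟩
  -- Build the descending sequence of pairs.
  have step0 : Relation.ReflTransGen step x y := hxy.to_reflTransGen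
  let T := {p : X × X // Relation.ReflTransGen step p.1 p.2 ∧ le p.2 p.1 ∧ p.2 ≠ p.1}
  let next : T → T := fun t =>
    let h := L t.2.1 t.1.2 t.2.2.1 t.2.2.2
    ⟨⟨t.1.2, Classical.choose h⟩, (Classical.choose_spec h).2.2,
      (Classical.choose_spec h).1, (Classical.choose_spec h).2.1⟩
  let p : ℕ → T := fun n => next^[n] ⟨⟨x, y⟩, step0, hlt.1, hlt.2⟩
  have hsucc : ∀ n, p (n + 1) = next (p n) := fun n => Function.iterate_succ_apply' _ _ _
  have hlink : ∀ n, (p (n + 1)).1.1 = (p n).1.2 := by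
    intro n
    rw [hsucc n]
  set g : ℕ → X := fun n => (p n).1.1 with hg
  have hdesc : ∀ n, le (g (n + 1)) (g n) ∧ g (n + 1) ≠ g n := by
    intro n
    have := (p n).2
    rw [hg]
    simp only [hlink n]
    exact ⟨this.2.1, this.2.2⟩
  have hreach : ∀ n, Relation.ReflTransGen step x (g n) := by
    intro n
    induction n with
    | zero => exact Relation.ReflTransGen.refl
    | succ k ih =>
      have := (p k).2.1
      have : Relation.ReflTransGen step (g k) (g (k + 1)) := by
        rw [hg]; simp only [hlink k]; exact (p k).2.1
      exact ih.trans this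
  -- strict descending over gaps
  have hle : ∀ n k, le (g (n + k)) (g n) := by
    intro n k
    induction k with
    | zero => exact hrefl _
    | succ m ih => exact htrans _ _ _ (hdesc (n + m)).1 ih
  have hne : ∀ n k, g (n + k + 1) ≠ g n := by
    intro n k h
    have h1 : le (g (n + 1 + k)) (g (n + 1)) := hle (n + 1) k
    have h2 : g (n + 1 + k) = g n := by rw [show n + 1 + k = n + k + 1 by ring, h]
    rw [h2] at h1
    exact (hdesc n).2 (hantisymm _ _ (hdesc n).1 h1)
  have hinj : Function.Injective g := by
    intro i j hij
    by_contra hne'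
    rcases Nat.lt_or_ge i j with h | h
    · obtain ⟨k, rfl⟩ := Nat.exists_eq_add_of_lt h
      exact hne i k hij.symm
    · have h' : i > j := lt_of_le_of_ne h (Ne.symm hne')
      obtain ⟨k, rfl⟩ := Nat.exists_eq_add_of_lt h'
      exact hne j k hij
  refine ⟨Set.infinite_of_injective_forall_mem hinj hreach, g, hreach, hdesc⟩
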